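/- Let F be a bimonad and B a monad in K with a 1-cell (F, ψ_{B,F}) in Mnd(K). The monoidal category _{ψ_B}{}^F_F YD_s(K,A) of strong Yetter–Drinfel'd modules equipped with compatible distributive laws ψ_{B,X} acts on the category ^F_B K of left relative (F,B)-modules: (X, M) ↦ X∘M, where X∘M carries the left B-module structure (ν_M lifted through ψ_{B,X}) and left F-comodule structure (l_M lifted through φ_{X,F}); in particular X∘M is again a relative (F,B)-module. -/
import Mathlib


open CategoryTheory Bicategory

namespace Paper

variable {K : Type*} [Bicategory K]

/-- A monad in a bicategory. -/
structure Mnd (a : K) where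
  E : a ⟶ a
  mul : E ≫ E ⟶ E
  unit : 𝟙 a ⟶ E
  assoc : (α_ E E E).inv ≫ mul ▷ E ≫ mul = E ◁ mul ≫ mul
  left_unit : (λ_ E).inv ≫ unit ▷ E ≫ mul = 𝟙 E
  right_unit : (ρ_ E).inv ≫ E ◁ unit ≫ mul = 𝟙 E

variable {a : K}

/-- Tensor (= horizontal composite) of two "unit elements". -/
def tunit {X Y : a ⟶ a} (u : 𝟙 a ⟶ X) (v : 𝟙 a ⟶ Y) : 𝟙 a ⟶ X ≫ Y :=
  (λ_ (𝟙 a)).inv ≫ u ▷ 𝟙 a ≫ X ◁ v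

/-- Multiplication on a composite `X ≫ Y` built from multiplications on `X`, `Y`
and a distributive law `d : Y ≫ X ⟶ X ≫ Y`. -/
def tmul {X Y : a ⟶ a} (mX : X ≫ X ⟶ X) (mY : Y ≫ Y ⟶ Y) (d : Y ≫ X ⟶ X ≫ Y) :
    (X ≫ Y) ≫ X ≫ Y ⟶ X ≫ Y :=
  (α_ X Y (X ≫ Y)).hom ≫ X ◁ ((α_ Y X Y).inv ≫ d ▷ Y ≫ (α_ X Y Y).hom) ≫
    (α_ X X (Y ≫ Y)).inv ≫ mX ▷ (Y ≫ Y) ≫ X ◁ mY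

/-- Comultiplication on a composite `X ≫ Y`. -/
def tcomul {X Y : a ⟶ a} (cX : X ⟶ X ≫ X) (cY : Y ⟶ Y ≫ Y) (d : X ≫ Y ⟶ Y ≫ X) :
    X ≫ Y ⟶ (X ≫ Y) ≫ X ≫ Y :=
  cX ▷ Y ≫ (α_ X X Y).hom ≫
    X ◁ (X ◁ cY ≫ (α_ X Y Y).inv ≫ d ▷ Y ≫ (α_ Y X Y).hom) ≫ (α_ X Y (X ≫ Y)).inv

/-- Extend distributive laws, moving `X` to the left across a composite `Y1 ≫ Y2`. -/
def dext {X Y1 Y2 : a ⟶ a} (d1 : Y1 ≫ X ⟶ X ≫ Y1) (d2 : Y2 ≫ X ⟶ X ≫ Y2) :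
    (Y1 ≫ Y2) ≫ X ⟶ X ≫ Y1 ≫ Y2 :=
  (α_ Y1 Y2 X).hom ≫ Y1 ◁ d2 ≫ (α_ Y1 X Y2).inv ≫ d1 ▷ Y2 ≫ (α_ X Y1 Y2).hom

/-- Extend distributive laws, moving `X` to the right across a composite `Y1 ≫ Y2`. -/
def dext' {X Y1 Y2 : a ⟶ a} (d1 : X ≫ Y1 ⟶ Y1 ≫ X) (d2 : X ≫ Y2 ⟶ Y2 ≫ X) :
    X ≫ Y1 ≫ Y2 ⟶ (Y1 ≫ Y2) ≫ X :=
  (α_ X Y1 Y2).inv ≫ d1 ▷ Y2 ≫ (α_ Y1 X Y2).hom ≫ Y1 ◁ d2 ≫ (α_ Y1 Y2 X).inv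

/-- Convolution product of `f g : 𝟙 a ⟶ T` with respect to a multiplication on `T`. -/
def conv {T : a ⟶ a} (m : T ≫ T ⟶ T) (f g : 𝟙 a ⟶ T) : 𝟙 a ⟶ T :=
  (λ_ (𝟙 a)).inv ≫ f ▷ 𝟙 a ≫ T ◁ g ≫ m

/-- Convolution product of `f g : T ⟶ 𝟙 a` with respect to a comultiplication on `T`. -/
def convC {T : a ⟶ a} (c : T ⟶ T ≫ T) (f g : T ⟶ 𝟙 a) : T ⟶ 𝟙 a :=
  c ≫ f ▷ T ≫ (λ_ T).hom ≫ g

/-- The multiplication on `E ≫ E ≫ E` built from `mul` and the distributive law `τ`. -/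
def mul3 {E : a ⟶ a} (mul : E ≫ E ⟶ E) (τ : E ≫ E ⟶ E ≫ E) :
    (E ≫ E ≫ E) ≫ E ≫ E ≫ E ⟶ E ≫ E ≫ E :=
  tmul mul (tmul mul mul τ) (dext τ τ)

/-- The multiplication on `E ≫ E ≫ E ≫ E`. -/
def mul4 {E : a ⟶ a} (mul : E ≫ E ⟶ E) (τ : E ≫ E ⟶ E ≫ E) :
    (E ≫ E ≫ E ≫ E) ≫ E ≫ E ≫ E ≫ E ⟶ E ≫ E ≫ E ≫ E :=
  tmul mul (mul3 mul τ) (dext τ (dext τ τ))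

/-- The comultiplication on `E ≫ E ≫ E`. -/
def comul3 {E : a ⟶ a} (comul : E ⟶ E ≫ E) (τ : E ≫ E ⟶ E ≫ E) :
    E ≫ E ≫ E ⟶ (E ≫ E ≫ E) ≫ E ≫ E ≫ E :=
  tcomul comul (tcomul comul comul τ) (dext' τ τ)

/-- The comultiplication on `E ≫ E ≫ E ≫ E`. -/
def comul4 {E : a ⟶ a} (comul : E ⟶ E ≫ E) (τ : E ≫ E ⟶ E ≫ E) :
    E ≫ E ≫ E ≫ E ⟶ (E ≫ E ≫ E ≫ E) ≫ E ≫ E ≫ E ≫ E :=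
  tcomul comul (comul3 comul τ) (dext' τ (dext' τ τ))

/-- "Action of `Q ≫ P` on `X ≫ Y`": `P` crosses `X` via `dPX`, then `Q` acts on `X`
and `P` acts on `Y`. -/
def actT {b : K} {P Q X : a ⟶ a} {Y : a ⟶ b}
    (dPX : P ≫ X ⟶ X ≫ P) (aQX : Q ≫ X ⟶ X) (aPY : P ≫ Y ⟶ Y) :
    (Q ≫ P) ≫ X ≫ Y ⟶ X ≫ Y :=
  (α_ Q P (X ≫ Y)).hom ≫ Q ◁ ((α_ P X Y).inv ≫ dPX ▷ Y ≫ (α_ X P Y).hom) ≫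
    (α_ Q X (P ≫ Y)).inv ≫ aQX ▷ (P ≫ Y) ≫ X ◁ aPY

/-- A (left) bimonad in a 2-category: a monad and a comonad structure on the same
1-cell, compatible through a 2-cell `lam : F ≫ F ⟶ F ≫ F` which is a 1-cell-datum
both in `Mnd(K)` and in `Comnd(K)`. -/
structure Bimonad (a : K) extends Mnd a where
  comul : E ⟶ E ≫ E
  counit : E ⟶ 𝟙 a
  coassoc : comul ≫ comul ▷ E ≫ (α_ E E E).hom = comul ≫ E ◁ comul
  left_counit : comul ≫ counit ▷ E ≫ (λ_ E).hom = 𝟙 E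
  right_counit : comul ≫ E ◁ counit ≫ (ρ_ E).hom = 𝟙 E
  lam : E ≫ E ⟶ E ≫ E
  /-- `(F, lam)` is a 1-cell datum in `Mnd(K)` -/
  lam_mul : E ◁ lam ≫ (α_ E E E).inv ≫ lam ▷ E ≫ (α_ E E E).hom ≫ E ◁ mul
      = (α_ E E E).inv ≫ mul ▷ E ≫ lam
  lam_unit : (λ_ E).inv ≫ unit ▷ E ≫ lam = (ρ_ E).inv ≫ E ◁ unit
  /-- `(F, lam)` is a 1-cell datum in `Comnd(K)` -/
  lam_comul : E ◁ comul ≫ (α_ E E E).inv ≫ lam ▷ E ≫ (α_ E E E).hom ≫ E ◁ lam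
      = lam ≫ comul ▷ E ≫ (α_ E E E).hom
  lam_counit : lam ≫ counit ▷ E ≫ (λ_ E).hom = E ◁ counit ≫ (ρ_ E).hom
  /-- compatibility of `mul` and `comul` through `lam` -/
  mul_comul : mul ≫ comul
      = E ◁ comul ≫ (α_ E E E).inv ≫ lam ▷ E ≫ (α_ E E E).hom ≫ E ◁ mul
  counit_mul : mul ≫ counit = E ◁ counit ≫ (ρ_ E).hom ≫ counit
  comul_unit : unit ≫ comul = (λ_ (𝟙 a)).inv ≫ unit ▷ 𝟙 a ≫ E ◁ unit
  counit_unit : unit ≫ counit = 𝟙 (𝟙 a)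

/-- The data of a (strong) Yetter–Drinfel'd module over a bimonad `F`:
a 1-cell `X` with 2-cells `ψ : F ≫ X ⟶ X ≫ F` and `φ : X ≫ F ⟶ F ≫ X`. -/
structure YDData {a : K} (F : Bimonad a) where
  X : a ⟶ a
  ψ : F.E ≫ X ⟶ X ≫ F.E
  φ : X ≫ F.E ⟶ F.E ≫ X

/-- The axioms of a strong Yetter–Drinfel'd module: `(X, ψ)` is a 1-cell datum in
`Mnd(K)`, `(X, φ)` is a 1-cell datum in `Comnd(K)`, and the three-strand
compatibility between `ψ`, `lam` and `φ` holds. -/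
def IsYDs {a : K} (F : Bimonad a) (M : YDData F) : Prop :=
  (F.E ◁ M.ψ ≫ (α_ F.E M.X F.E).inv ≫ M.ψ ▷ F.E ≫ (α_ M.X F.E F.E).hom ≫
      M.X ◁ F.mul = (α_ F.E F.E M.X).inv ≫ F.mul ▷ M.X ≫ M.ψ) ∧
  ((λ_ M.X).inv ≫ F.unit ▷ M.X ≫ M.ψ = (ρ_ M.X).inv ≫ M.X ◁ F.unit) ∧
  (M.X ◁ F.comul ≫ (α_ M.X F.E F.E).inv ≫ M.φ ▷ F.E ≫ (α_ F.E M.X F.E).hom ≫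
      F.E ◁ M.φ = M.φ ≫ F.comul ▷ M.X ≫ (α_ F.E F.E M.X).hom) ∧
  (M.φ ≫ F.counit ▷ M.X ≫ (λ_ M.X).hom = M.X ◁ F.counit ≫ (ρ_ M.X).hom) ∧
  (M.ψ ▷ F.E ≫ (α_ M.X F.E F.E).hom ≫ M.X ◁ F.lam ≫ (α_ M.X F.E F.E).inv ≫
      M.φ ▷ F.E
    = (α_ F.E M.X F.E).hom ≫ F.E ◁ M.φ ≫ (α_ F.E F.E M.X).inv ≫ F.lam ▷ M.X ≫
        (α_ F.E F.E M.X).hom ≫ F.E ◁ M.ψ ≫ (α_ F.E M.X F.E).inv)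

/-- Morphisms of (strong) Yetter–Drinfel'd modules: 2-cells which are
simultaneously 2-cells in `Mnd(K)` and in `Comnd(K)`. -/
def IsYDHom {a : K} (F : Bimonad a) (M N : YDData F) (f : M.X ⟶ N.X) : Prop :=
  (M.ψ ≫ f ▷ F.E = F.E ◁ f ≫ N.ψ) ∧ (M.φ ≫ F.E ◁ f = f ▷ F.E ≫ N.φ)

/-- The tensor product (= horizontal composite) of two Yetter–Drinfel'd modules. -/
def ydTensor {a : K} (F : Bimonad a) (M N : YDData F) : YDData F where
  X := M.X ≫ N.X
  ψ := dext' M.ψ N.ψ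
  φ := dext M.φ N.φ

/-- The unit Yetter–Drinfel'd module. -/
def ydUnit {a : K} (F : Bimonad a) : YDData F where
  X := 𝟙 a
  ψ := (ρ_ F.E).hom ≫ (λ_ F.E).inv
  φ := (λ_ F.E).hom ≫ (ρ_ F.E).inv

/-- A left relative `(F,B)`-module in `K`: a left `F`-comodule and left `B`-module
whose structures are compatible through `ψBF`. -/
structure RelMod {a : K} (F : Bimonad a) (B : Mnd a)
    (ψBF : B.E ≫ F.E ⟶ F.E ≫ B.E) {b : K} (M : a ⟶ b) where
  act : B.E ≫ M ⟶ M
  act_assoc : (α_ B.E B.E M).inv ≫ B.mul ▷ M ≫ act = B.E ◁ act ≫ act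
  act_unit : (λ_ M).inv ≫ B.unit ▷ M ≫ act = 𝟙 M
  coact : M ⟶ F.E ≫ M
  coact_coassoc : coact ≫ F.comul ▷ M ≫ (α_ F.E F.E M).hom = coact ≫ F.E ◁ coact
  coact_counit : coact ≫ F.counit ▷ M ≫ (λ_ M).hom = 𝟙 M
  rel : act ≫ coact
      = B.E ◁ coact ≫ (α_ B.E F.E M).inv ≫ ψBF ▷ M ≫ (α_ F.E B.E M).hom ≫
          F.E ◁ act

/-- Let `F` be a bimonad and `B` a monad in `K` with a 1-cell
`(F, ψBF)` in `Mnd(K)`.  The monoidal category of strong Yetter–Drinfel'd modules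
equipped with compatible distributive laws `ψ_{B,X}` acts on the category of left
relative `(F,B)`-modules: `(X, M) ↦ X ∘ M`, where `X ∘ M` carries the `B`-module
structure lifted through `ψ_{B,X}` and the `F`-comodule structure lifted through
`φ_{X,F}`.  In particular `X ∘ M` is again a relative `(F,B)`-module, and morphisms
of relative modules are sent to morphisms of relative modules. -/
theorem strong_yd_acts_on_relative_modules {K : Type*} [Bicategory K]
    [Bicategory.Strict K] {a : K} (F : Bimonad a) (B : Mnd a)
    (ψBF : B.E ≫ F.E ⟶ F.E ≫ B.E)
    (hψBF_mul : B.E ◁ ψBF ≫ (α_ B.E F.E B.E).inv ≫ ψBF ▷ B.E ≫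
        (α_ F.E B.E B.E).hom ≫ F.E ◁ B.mul
      = (α_ B.E B.E F.E).inv ≫ B.mul ▷ F.E ≫ ψBF)
    (hψBF_unit : (λ_ F.E).inv ≫ B.unit ▷ F.E ≫ ψBF = (ρ_ F.E).inv ≫ F.E ◁ B.unit)
    -- a strong Yetter–Drinfel'd module with a compatible distributive law `ψBX`
    (M : YDData F) (hM : IsYDs F M) (ψBX : B.E ≫ M.X ⟶ M.X ≫ B.E)
    (hψBX_mul : B.E ◁ ψBX ≫ (α_ B.E M.X B.E).inv ≫ ψBX ▷ B.E ≫
        (α_ M.X B.E B.E).hom ≫ M.X ◁ B.mul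
      = (α_ B.E B.E M.X).inv ≫ B.mul ▷ M.X ≫ ψBX)
    (hψBX_unit : (λ_ M.X).inv ≫ B.unit ▷ M.X ≫ ψBX
      = (ρ_ M.X).inv ≫ M.X ◁ B.unit)
    -- Yang–Baxter equation relating `ψBX`, `ψ_{F,X}` and `ψBF`
    (hYB₁ : B.E ◁ M.ψ ≫ (α_ B.E M.X F.E).inv ≫ ψBX ▷ F.E ≫
        (α_ M.X B.E F.E).hom ≫ M.X ◁ ψBF
      = (α_ B.E F.E M.X).inv ≫ ψBF ▷ M.X ≫ (α_ F.E B.E M.X).hom ≫ F.E ◁ ψBX ≫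
        (α_ F.E M.X B.E).inv ≫ M.ψ ▷ B.E ≫ (α_ M.X F.E B.E).hom)
    -- Yang–Baxter equation relating `ψBX`, `φ_{X,F}` and `ψBF`
    (hYB₂ : B.E ◁ M.φ ≫ (α_ B.E F.E M.X).inv ≫ ψBF ▷ M.X ≫
        (α_ F.E B.E M.X).hom ≫ F.E ◁ ψBX
      = (α_ B.E M.X F.E).inv ≫ ψBX ▷ F.E ≫ (α_ M.X B.E F.E).hom ≫ M.X ◁ ψBF ≫
        (α_ M.X F.E B.E).inv ≫ M.φ ▷ B.E ≫ (α_ F.E M.X B.E).hom) :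
    -- `X ∘ M` is again a relative `(F,B)`-module, with the lifted structures …
    (∀ {b : K} (Mm : a ⟶ b) (R : RelMod F B ψBF Mm),
      ∃ R' : RelMod F B ψBF (M.X ≫ Mm),
        R'.act = (α_ B.E M.X Mm).inv ≫ ψBX ▷ Mm ≫ (α_ M.X B.E Mm).hom ≫
            M.X ◁ R.act ∧
        R'.coact = M.X ◁ R.coact ≫ (α_ M.X F.E Mm).inv ≫ M.φ ▷ Mm ≫
            (α_ F.E M.X Mm).hom) ∧
    -- … and morphisms of relative modules are sent to morphisms.
    (∀ {b : K} (Mm Nm : a ⟶ b) (R : RelMod F B ψBF Mm) (S : RelMod F B ψBF Nm)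
        (g : Mm ⟶ Nm), R.act ≫ g = B.E ◁ g ≫ S.act →
        R.coact ≫ F.E ◁ g = g ≫ S.coact →
      (((α_ B.E M.X Mm).inv ≫ ψBX ▷ Mm ≫ (α_ M.X B.E Mm).hom ≫ M.X ◁ R.act) ≫
          M.X ◁ g
        = B.E ◁ (M.X ◁ g) ≫
            ((α_ B.E M.X Nm).inv ≫ ψBX ▷ Nm ≫ (α_ M.X B.E Nm).hom ≫
              M.X ◁ S.act)) ∧
      ((M.X ◁ R.coact ≫ (α_ M.X F.E Mm).inv ≫ M.φ ▷ Mm ≫ (α_ F.E M.X Mm).hom) ≫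
          F.E ◁ (M.X ◁ g)
        = M.X ◁ g ≫
            (M.X ◁ S.coact ≫ (α_ M.X F.E Nm).inv ≫ M.φ ▷ Nm ≫
              (α_ F.E M.X Nm).hom))) := by
  obtain ⟨-, -, hφ_comul, hφ_counit, -⟩ := hM
  constructor
  · intro b Mm R
    refine ⟨{
      act := (α_ B.E M.X Mm).inv ≫ ψBX ▷ Mm ≫ (α_ M.X B.E Mm).hom ≫ M.X ◁ R.act
      coact := M.X ◁ R.coact ≫ (α_ M.X F.E Mm).inv ≫ M.φ ▷ Mm ≫
        (α_ F.E M.X Mm).hom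
      act_assoc := ?_
      act_unit := ?_
      coact_coassoc := ?_
      coact_counit := ?_
      rel := ?_ }, rfl, rfl⟩
    · -- act_assoc
      calc (α_ B.E B.E (M.X ≫ Mm)).inv ≫ B.mul ▷ (M.X ≫ Mm) ≫
            ((α_ B.E M.X Mm).inv ≫ ψBX ▷ Mm ≫ (α_ M.X B.E Mm).hom ≫ M.X ◁ R.act)
          = B.E ◁ (α_ B.E M.X Mm).inv ≫ (α_ B.E (B.E ≫ M.X) Mm).inv ≫
              (((α_ B.E B.E M.X).inv ≫ B.mul ▷ M.X ≫ ψBX) ▷ Mm) ≫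
              (α_ M.X B.E Mm).hom ≫ M.X ◁ R.act := by bicategory
        _ = B.E ◁ (α_ B.E M.X Mm).inv ≫ (α_ B.E (B.E ≫ M.X) Mm).inv ≫
              ((B.E ◁ ψBX ≫ (α_ B.E M.X B.E).inv ≫ ψBX ▷ B.E ≫
                (α_ M.X B.E B.E).hom ≫ M.X ◁ B.mul) ▷ Mm) ≫
              (α_ M.X B.E Mm).hom ≫ M.X ◁ R.act := by rw [← hψBX_mul]
        _ = B.E ◁ ((α_ B.E M.X Mm).inv ≫ ψBX ▷ Mm ≫ (α_ M.X B.E Mm).hom) ≫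
              (α_ B.E M.X (B.E ≫ Mm)).inv ≫ ψBX ▷ (B.E ≫ Mm) ≫
              (α_ M.X B.E (B.E ≫ Mm)).hom ≫
              M.X ◁ ((α_ B.E B.E Mm).inv ≫ B.mul ▷ Mm ≫ R.act) := by bicategory
        _ = B.E ◁ ((α_ B.E M.X Mm).inv ≫ ψBX ▷ Mm ≫ (α_ M.X B.E Mm).hom) ≫
              (α_ B.E M.X (B.E ≫ Mm)).inv ≫ ψBX ▷ (B.E ≫ Mm) ≫
              (α_ M.X B.E (B.E ≫ Mm)).hom ≫
              M.X ◁ (B.E ◁ R.act ≫ R.act) := by rw [R.act_assoc]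
        _ = B.E ◁ ((α_ B.E M.X Mm).inv ≫ ψBX ▷ Mm ≫ (α_ M.X B.E Mm).hom) ≫
              (α_ B.E M.X (B.E ≫ Mm)).inv ≫
              (ψBX ▷ (B.E ≫ Mm) ≫ (M.X ≫ B.E) ◁ R.act) ≫
              (α_ M.X B.E Mm).hom ≫ M.X ◁ R.act := by bicategory
        _ = B.E ◁ ((α_ B.E M.X Mm).inv ≫ ψBX ▷ Mm ≫ (α_ M.X B.E Mm).hom) ≫
              (α_ B.E M.X (B.E ≫ Mm)).inv ≫
              ((B.E ≫ M.X) ◁ R.act ≫ ψBX ▷ Mm) ≫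
              (α_ M.X B.E Mm).hom ≫ M.X ◁ R.act := by
            rw [← whisker_exchange ψBX R.act]
        _ = B.E ◁ ((α_ B.E M.X Mm).inv ≫ ψBX ▷ Mm ≫ (α_ M.X B.E Mm).hom ≫
              M.X ◁ R.act) ≫
            ((α_ B.E M.X Mm).inv ≫ ψBX ▷ Mm ≫ (α_ M.X B.E Mm).hom ≫
              M.X ◁ R.act) := by bicategory
    · -- act_unit
      calc (λ_ (M.X ≫ Mm)).inv ≫ B.unit ▷ (M.X ≫ Mm) ≫
            ((α_ B.E M.X Mm).inv ≫ ψBX ▷ Mm ≫ (α_ M.X B.E Mm).hom ≫ M.X ◁ R.act)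
          = (((λ_ M.X).inv ≫ B.unit ▷ M.X ≫ ψBX) ▷ Mm) ≫
              (α_ M.X B.E Mm).hom ≫ M.X ◁ R.act := by bicategory
        _ = (((ρ_ M.X).inv ≫ M.X ◁ B.unit) ▷ Mm) ≫
              (α_ M.X B.E Mm).hom ≫ M.X ◁ R.act := by rw [hψBX_unit]
        _ = M.X ◁ ((λ_ Mm).inv ≫ B.unit ▷ Mm ≫ R.act) := by bicategory
        _ = M.X ◁ 𝟙 Mm := by rw [R.act_unit]
        _ = 𝟙 (M.X ≫ Mm) := by simp
    · -- coact_coassoc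
      calc (M.X ◁ R.coact ≫ (α_ M.X F.E Mm).inv ≫ M.φ ▷ Mm ≫
              (α_ F.E M.X Mm).hom) ≫
            F.comul ▷ (M.X ≫ Mm) ≫ (α_ F.E F.E (M.X ≫ Mm)).hom
          = M.X ◁ R.coact ≫ (α_ M.X F.E Mm).inv ≫
              ((M.φ ≫ F.comul ▷ M.X ≫ (α_ F.E F.E M.X).hom) ▷ Mm) ≫
              (α_ F.E (F.E ≫ M.X) Mm).hom ≫ F.E ◁ (α_ F.E M.X Mm).hom := by
            bicategory
        _ = M.X ◁ R.coact ≫ (α_ M.X F.E Mm).inv ≫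
              ((M.X ◁ F.comul ≫ (α_ M.X F.E F.E).inv ≫ M.φ ▷ F.E ≫
                (α_ F.E M.X F.E).hom ≫ F.E ◁ M.φ) ▷ Mm) ≫
              (α_ F.E (F.E ≫ M.X) Mm).hom ≫ F.E ◁ (α_ F.E M.X Mm).hom := by
            rw [← hφ_comul]
        _ = M.X ◁ (R.coact ≫ F.comul ▷ Mm ≫ (α_ F.E F.E Mm).hom) ≫
              (α_ M.X F.E (F.E ≫ Mm)).inv ≫ M.φ ▷ (F.E ≫ Mm) ≫
              (α_ F.E M.X (F.E ≫ Mm)).hom ≫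
              F.E ◁ ((α_ M.X F.E Mm).inv ≫ M.φ ▷ Mm ≫ (α_ F.E M.X Mm).hom) := by
            bicategory
        _ = M.X ◁ (R.coact ≫ F.E ◁ R.coact) ≫
              (α_ M.X F.E (F.E ≫ Mm)).inv ≫ M.φ ▷ (F.E ≫ Mm) ≫
              (α_ F.E M.X (F.E ≫ Mm)).hom ≫
              F.E ◁ ((α_ M.X F.E Mm).inv ≫ M.φ ▷ Mm ≫ (α_ F.E M.X Mm).hom) := by
            rw [R.coact_coassoc]
        _ = M.X ◁ R.coact ≫ (α_ M.X F.E Mm).inv ≫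
              ((M.X ≫ F.E) ◁ R.coact ≫ M.φ ▷ (F.E ≫ Mm)) ≫
              (α_ F.E M.X (F.E ≫ Mm)).hom ≫
              F.E ◁ ((α_ M.X F.E Mm).inv ≫ M.φ ▷ Mm ≫ (α_ F.E M.X Mm).hom) := by
            bicategory
        _ = M.X ◁ R.coact ≫ (α_ M.X F.E Mm).inv ≫
              (M.φ ▷ Mm ≫ (F.E ≫ M.X) ◁ R.coact) ≫
              (α_ F.E M.X (F.E ≫ Mm)).hom ≫
              F.E ◁ ((α_ M.X F.E Mm).inv ≫ M.φ ▷ Mm ≫ (α_ F.E M.X Mm).hom) := by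
            rw [whisker_exchange M.φ R.coact]
        _ = (M.X ◁ R.coact ≫ (α_ M.X F.E Mm).inv ≫ M.φ ▷ Mm ≫
              (α_ F.E M.X Mm).hom) ≫
            F.E ◁ (M.X ◁ R.coact ≫ (α_ M.X F.E Mm).inv ≫ M.φ ▷ Mm ≫
              (α_ F.E M.X Mm).hom) := by bicategory
    · -- coact_counit
      calc (M.X ◁ R.coact ≫ (α_ M.X F.E Mm).inv ≫ M.φ ▷ Mm ≫
              (α_ F.E M.X Mm).hom) ≫
            F.counit ▷ (M.X ≫ Mm) ≫ (λ_ (M.X ≫ Mm)).hom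
          = M.X ◁ R.coact ≫ (α_ M.X F.E Mm).inv ≫
              ((M.φ ≫ F.counit ▷ M.X ≫ (λ_ M.X).hom) ▷ Mm) := by bicategory
        _ = M.X ◁ R.coact ≫ (α_ M.X F.E Mm).inv ≫
              ((M.X ◁ F.counit ≫ (ρ_ M.X).hom) ▷ Mm) := by rw [hφ_counit]
        _ = M.X ◁ (R.coact ≫ F.counit ▷ Mm ≫ (λ_ Mm).hom) := by bicategory
        _ = M.X ◁ 𝟙 Mm := by rw [R.coact_counit]
        _ = 𝟙 (M.X ≫ Mm) := by simp
    · -- rel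
      calc ((α_ B.E M.X Mm).inv ≫ ψBX ▷ Mm ≫ (α_ M.X B.E Mm).hom ≫
              M.X ◁ R.act) ≫
            (M.X ◁ R.coact ≫ (α_ M.X F.E Mm).inv ≫ M.φ ▷ Mm ≫
              (α_ F.E M.X Mm).hom)
          = (α_ B.E M.X Mm).inv ≫ ψBX ▷ Mm ≫ (α_ M.X B.E Mm).hom ≫
              M.X ◁ (R.act ≫ R.coact) ≫
              (α_ M.X F.E Mm).inv ≫ M.φ ▷ Mm ≫ (α_ F.E M.X Mm).hom := by
            bicategory
        _ = (α_ B.E M.X Mm).inv ≫ ψBX ▷ Mm ≫ (α_ M.X B.E Mm).hom ≫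
              M.X ◁ (B.E ◁ R.coact ≫ (α_ B.E F.E Mm).inv ≫ ψBF ▷ Mm ≫
                (α_ F.E B.E Mm).hom ≫ F.E ◁ R.act) ≫
              (α_ M.X F.E Mm).inv ≫ M.φ ▷ Mm ≫ (α_ F.E M.X Mm).hom := by
            rw [R.rel]
        _ = (α_ B.E M.X Mm).inv ≫
              (ψBX ▷ Mm ≫ (M.X ≫ B.E) ◁ R.coact) ≫
              (α_ M.X B.E (F.E ≫ Mm)).hom ≫
              M.X ◁ ((α_ B.E F.E Mm).inv ≫ ψBF ▷ Mm ≫ (α_ F.E B.E Mm).hom ≫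
                F.E ◁ R.act) ≫
              (α_ M.X F.E Mm).inv ≫ M.φ ▷ Mm ≫ (α_ F.E M.X Mm).hom := by
            bicategory
        _ = (α_ B.E M.X Mm).inv ≫
              ((B.E ≫ M.X) ◁ R.coact ≫ ψBX ▷ (F.E ≫ Mm)) ≫
              (α_ M.X B.E (F.E ≫ Mm)).hom ≫
              M.X ◁ ((α_ B.E F.E Mm).inv ≫ ψBF ▷ Mm ≫ (α_ F.E B.E Mm).hom ≫
                F.E ◁ R.act) ≫
              (α_ M.X F.E Mm).inv ≫ M.φ ▷ Mm ≫ (α_ F.E M.X Mm).hom := by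
            rw [← whisker_exchange ψBX R.coact]
        _ = B.E ◁ (M.X ◁ R.coact) ≫ (α_ B.E M.X (F.E ≫ Mm)).inv ≫
              ψBX ▷ (F.E ≫ Mm) ≫ (α_ M.X B.E (F.E ≫ Mm)).hom ≫
              M.X ◁ ((α_ B.E F.E Mm).inv ≫ ψBF ▷ Mm ≫ (α_ F.E B.E Mm).hom) ≫
              (α_ M.X F.E (B.E ≫ Mm)).inv ≫
              ((M.X ≫ F.E) ◁ R.act ≫ M.φ ▷ Mm) ≫
              (α_ F.E M.X Mm).hom := by bicategory
        _ = B.E ◁ (M.X ◁ R.coact) ≫ (α_ B.E M.X (F.E ≫ Mm)).inv ≫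
              ψBX ▷ (F.E ≫ Mm) ≫ (α_ M.X B.E (F.E ≫ Mm)).hom ≫
              M.X ◁ ((α_ B.E F.E Mm).inv ≫ ψBF ▷ Mm ≫ (α_ F.E B.E Mm).hom) ≫
              (α_ M.X F.E (B.E ≫ Mm)).inv ≫
              (M.φ ▷ (B.E ≫ Mm) ≫ (F.E ≫ M.X) ◁ R.act) ≫
              (α_ F.E M.X Mm).hom := by rw [whisker_exchange M.φ R.act]
        _ = B.E ◁ (M.X ◁ R.coact) ≫ B.E ◁ (α_ M.X F.E Mm).inv ≫
              (α_ B.E (M.X ≫ F.E) Mm).inv ≫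
              (((α_ B.E M.X F.E).inv ≫ ψBX ▷ F.E ≫ (α_ M.X B.E F.E).hom ≫
                M.X ◁ ψBF ≫ (α_ M.X F.E B.E).inv ≫ M.φ ▷ B.E ≫
                (α_ F.E M.X B.E).hom) ▷ Mm) ≫
              (α_ F.E (M.X ≫ B.E) Mm).hom ≫
              F.E ◁ ((α_ M.X B.E Mm).hom ≫ M.X ◁ R.act) := by bicategory
        _ = B.E ◁ (M.X ◁ R.coact) ≫ B.E ◁ (α_ M.X F.E Mm).inv ≫
              (α_ B.E (M.X ≫ F.E) Mm).inv ≫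
              ((B.E ◁ M.φ ≫ (α_ B.E F.E M.X).inv ≫ ψBF ▷ M.X ≫
                (α_ F.E B.E M.X).hom ≫ F.E ◁ ψBX) ▷ Mm) ≫
              (α_ F.E (M.X ≫ B.E) Mm).hom ≫
              F.E ◁ ((α_ M.X B.E Mm).hom ≫ M.X ◁ R.act) := by rw [← hYB₂]
        _ = B.E ◁ (M.X ◁ R.coact ≫ (α_ M.X F.E Mm).inv ≫ M.φ ▷ Mm ≫
              (α_ F.E M.X Mm).hom) ≫
            (α_ B.E F.E (M.X ≫ Mm)).inv ≫ ψBF ▷ (M.X ≫ Mm) ≫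
            (α_ F.E B.E (M.X ≫ Mm)).hom ≫
            F.E ◁ ((α_ B.E M.X Mm).inv ≫ ψBX ▷ Mm ≫ (α_ M.X B.E Mm).hom ≫
              M.X ◁ R.act) := by bicategory
  · intro b Mm Nm R S g hact hcoact
    constructor
    · calc ((α_ B.E M.X Mm).inv ≫ ψBX ▷ Mm ≫ (α_ M.X B.E Mm).hom ≫
              M.X ◁ R.act) ≫ M.X ◁ g
          = (α_ B.E M.X Mm).inv ≫ ψBX ▷ Mm ≫ (α_ M.X B.E Mm).hom ≫
              M.X ◁ (R.act ≫ g) := by bicategory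
        _ = (α_ B.E M.X Mm).inv ≫ ψBX ▷ Mm ≫ (α_ M.X B.E Mm).hom ≫
              M.X ◁ (B.E ◁ g ≫ S.act) := by rw [hact]
        _ = (α_ B.E M.X Mm).inv ≫ (ψBX ▷ Mm ≫ (M.X ≫ B.E) ◁ g) ≫
              (α_ M.X B.E Nm).hom ≫ M.X ◁ S.act := by bicategory
        _ = (α_ B.E M.X Mm).inv ≫ ((B.E ≫ M.X) ◁ g ≫ ψBX ▷ Nm) ≫
              (α_ M.X B.E Nm).hom ≫ M.X ◁ S.act := by
            rw [← whisker_exchange ψBX g]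
        _ = B.E ◁ (M.X ◁ g) ≫
              ((α_ B.E M.X Nm).inv ≫ ψBX ▷ Nm ≫ (α_ M.X B.E Nm).hom ≫
                M.X ◁ S.act) := by bicategory
    · calc (M.X ◁ R.coact ≫ (α_ M.X F.E Mm).inv ≫ M.φ ▷ Mm ≫
              (α_ F.E M.X Mm).hom) ≫ F.E ◁ (M.X ◁ g)
          = M.X ◁ R.coact ≫ (α_ M.X F.E Mm).inv ≫
              (M.φ ▷ Mm ≫ (F.E ≫ M.X) ◁ g) ≫ (α_ F.E M.X Nm).hom := by
            bicategory
        _ = M.X ◁ R.coact ≫ (α_ M.X F.E Mm).inv ≫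
              ((M.X ≫ F.E) ◁ g ≫ M.φ ▷ Nm) ≫ (α_ F.E M.X Nm).hom := by
            rw [← whisker_exchange M.φ g]
        _ = M.X ◁ (R.coact ≫ F.E ◁ g) ≫ (α_ M.X F.E Nm).inv ≫
              M.φ ▷ Nm ≫ (α_ F.E M.X Nm).hom := by bicategory
        _ = M.X ◁ (g ≫ S.coact) ≫ (α_ M.X F.E Nm).inv ≫
              M.φ ▷ Nm ≫ (α_ F.E M.X Nm).hom := by rw [hcoact]
        _ = M.X ◁ g ≫
              (M.X ◁ S.coact ≫ (α_ M.X F.E Nm).inv ≫ M.φ ▷ Nm ≫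
                (α_ F.E M.X Nm).hom) := by bicategory


end Paper
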